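/- The total number T(3,m,2) = Σ_k T(3,m,2,k) of tilings of a 3×m rectangle with 1×1 and 2×2 squares equals (2^{m+1} + (−1)^m)/3 (the Jacobsthal numbers). -/

import Mathlib

/-- The set of cells covered by an `s×s` square whose corner is at `p`. -/
def squareCells (s : ℕ) (p : ℕ × ℕ) : Finset (ℕ × ℕ) :=
  Finset.Ico p.1 (p.1 + s) ×ˢ Finset.Ico p.2 (p.2 + s)

/-- `T n m s k`: the number of ways to place `k` pairwise non-overlapping axis-aligned
`s×s` squares at integer positions inside an `n×m` rectangle (the remaining cells
being covered by `1×1` squares). -/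
noncomputable def T (n m s k : ℕ) : ℕ :=
  Set.ncard {S : Finset (ℕ × ℕ) |
    S.card = k ∧
    (∀ p ∈ S, p.1 + s ≤ n ∧ p.2 + s ≤ m) ∧
    (S : Set (ℕ × ℕ)).Pairwise fun p q => Disjoint (squareCells s p) (squareCells s q)}

/-- `Ttot n m s`: total number of tilings of the `n×m` rectangle by `1×1` and `s×s`
squares (summing over all possible numbers of `s×s` squares). -/
noncomputable def Ttot (n m s : ℕ) : ℕ := ∑ k ∈ Finset.range (n * m + 1), T n m s k

/-- Auxiliary set: all valid placements of 2×2 squares in the 3×m rectangle. -/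
def A (m : ℕ) : Set (Finset (ℕ × ℕ)) :=
  {S | (∀ p ∈ S, p.1 + 2 ≤ 3 ∧ p.2 + 2 ≤ m) ∧
    (S : Set (ℕ × ℕ)).Pairwise fun p q => Disjoint (squareCells 2 p) (squareCells 2 q)}

lemma mem_squareCells {x p : ℕ × ℕ} :
    x ∈ squareCells 2 p ↔ p.1 ≤ x.1 ∧ x.1 < p.1 + 2 ∧ p.2 ≤ x.2 ∧ x.2 < p.2 + 2 := by
  simp [squareCells, Finset.mem_product, Finset.mem_Ico, and_assoc]

lemma not_disjoint_of_close {p q : ℕ × ℕ} (h1 : p.1 ≤ q.1 + 1) (h2 : q.1 ≤ p.1 + 1)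
    (h3 : p.2 ≤ q.2 + 1) (h4 : q.2 ≤ p.2 + 1) :
    ¬ Disjoint (squareCells 2 p) (squareCells 2 q) := by
  rw [Finset.not_disjoint_iff]
  exact ⟨(max p.1 q.1, max p.2 q.2), by rw [mem_squareCells]; constructor <;> omega,
    by rw [mem_squareCells]; constructor <;> omega⟩

lemma disjoint_of_far {p q : ℕ × ℕ} (h : p.2 + 2 ≤ q.2) :
    Disjoint (squareCells 2 p) (squareCells 2 q) := by
  rw [Finset.disjoint_left]
  intro a ha hb
  rw [mem_squareCells] at ha hb
  omega

lemma subset_grid {m : ℕ} {S : Finset (ℕ × ℕ)} (hS : S ∈ A m) :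
    S ⊆ Finset.range 3 ×ˢ Finset.range m := by
  intro p hp
  have := hS.1 p hp
  simp only [Finset.mem_product, Finset.mem_range]
  omega

lemma finite_A (m : ℕ) : (A m).Finite := by
  apply Set.Finite.subset (Finset.range 3 ×ˢ Finset.range m).powerset.finite_toSet
  intro S hS
  rw [Finset.mem_coe, Finset.mem_powerset]
  exact subset_grid hS

lemma Ttot_eq (m : ℕ) : Ttot 3 m 2 = (A m).ncard := by
  classical
  have hfin := finite_A m
  have hsub : ∀ S ∈ hfin.toFinset, S.card ∈ Finset.range (3 * m + 1) := by
    intro S hS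
    rw [Set.Finite.mem_toFinset] at hS
    have h1 := Finset.card_le_card (subset_grid hS)
    simp only [Finset.card_product, Finset.card_range] at h1
    simp only [Finset.mem_range]
    omega
  have hTk : ∀ k, T 3 m 2 k = (hfin.toFinset.filter (fun S => S.card = k)).card := by
    intro k
    have hset : {S : Finset (ℕ × ℕ) |
        S.card = k ∧
        (∀ p ∈ S, p.1 + 2 ≤ 3 ∧ p.2 + 2 ≤ m) ∧
        (S : Set (ℕ × ℕ)).Pairwise fun p q => Disjoint (squareCells 2 p) (squareCells 2 q)}
        = ↑(hfin.toFinset.filter (fun S => S.card = k)) := by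
      ext S
      simp only [Set.mem_setOf_eq, Finset.coe_filter, Set.Finite.mem_toFinset, Set.mem_setOf_eq]
      unfold A
      simp only [Set.mem_setOf_eq]
      tauto
    rw [T, hset, Set.ncard_coe_finset]
  rw [Ttot]
  simp only [hTk]
  rw [← Finset.card_eq_sum_card_fiberwise hsub, ← Set.ncard_coe_finset,
    Set.Finite.coe_toFinset]

lemma A_small {m : ℕ} (hm : m ≤ 1) : A m = {∅} := by
  ext S
  simp only [Set.mem_singleton_iff]
  constructor
  · intro hS
    rw [Finset.eq_empty_iff_forall_notMem]
    intro p hp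
    have := hS.1 p hp
    omega
  · rintro rfl
    exact ⟨by simp, by simp⟩

lemma notmem_self {m : ℕ} {r : ℕ} {S : Finset (ℕ × ℕ)} (hS : S ∈ A m) : (r, m) ∉ S := by
  intro h
  have h2 : m + 2 ≤ m := (hS.1 _ h).2
  omega

lemma insert_mem {m r : ℕ} {S : Finset (ℕ × ℕ)} (hr : r ≤ 1) (hS : S ∈ A m) :
    insert (r, m) S ∈ A (m + 2) := by
  refine ⟨?_, ?_⟩
  · intro p hp
    rcases Finset.mem_insert.1 hp with rfl | hp
    · simp; omega
    · have := hS.1 p hp; omega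
  · rw [Finset.coe_insert]
    haveI : Std.Symm (fun p q : ℕ × ℕ => Disjoint (squareCells 2 p) (squareCells 2 q)) :=
      ⟨fun p q h => h.symm⟩
    rw [Set.pairwise_insert_of_symm]
    refine ⟨hS.2, ?_⟩
    intro q hq _
    have hq2 := (hS.1 q hq).2
    exact (disjoint_of_far (p := q) (q := (r, m)) (by simpa using hq2)).symm

lemma erase_mem {m r : ℕ} {S : Finset (ℕ × ℕ)} (hS : S ∈ A (m + 2)) (hmem : (r, m) ∈ S) :
    S.erase (r, m) ∈ A m := by
  have hr : r ≤ 1 := by have := (hS.1 _ hmem).1; simpa using by omega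
  refine ⟨?_, hS.2.mono (by simp [Finset.erase_subset])⟩
  intro q hq
  have hqS := Finset.mem_of_mem_erase hq
  have hqne : q ≠ (r, m) := Finset.ne_of_mem_erase hq
  have hcond := hS.1 q hqS
  refine ⟨hcond.1, ?_⟩
  by_contra hc
  push_neg at hc
  have hdisj := hS.2 (by exact hqS) (by exact hmem) hqne
  exact not_disjoint_of_close (by omega) (by omega) (by omega) (by omega) hdisj

lemma A_decomp (m : ℕ) :
    A (m + 2) = (A (m + 1) ∪ insert (0, m) '' A m) ∪ insert (1, m) '' A m := by
  ext S
  constructor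
  · intro hS
    by_cases h : ∃ p ∈ S, p.2 = m
    · obtain ⟨⟨r, c⟩, hpS, hpm⟩ := h
      simp only at hpm
      have hpS' : (r, m) ∈ S := by rw [← hpm]; exact hpS
      have hr : r ≤ 1 := by have := (hS.1 _ hpS').1; simpa using by omega
      have hrest := erase_mem hS hpS'
      have hins : S = insert (r, m) (S.erase (r, m)) := (Finset.insert_erase hpS').symm
      interval_cases r
      · exact Or.inl (Or.inr ⟨S.erase (0, m), hrest, hins.symm⟩)
      · exact Or.inr ⟨S.erase (1, m), hrest, hins.symm⟩
    · push_neg at h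
      exact Or.inl (Or.inl ⟨fun p hp => ⟨(hS.1 p hp).1, by
        have h1 := (hS.1 p hp).2; have h2 := h p hp; omega⟩, hS.2⟩)
  · rintro ((hS | ⟨S0, hS0, rfl⟩) | ⟨S1, hS1, rfl⟩)
    · exact ⟨fun p hp => ⟨(hS.1 p hp).1, by have := (hS.1 p hp).2; omega⟩, hS.2⟩
    · exact insert_mem (by norm_num) hS0
    · exact insert_mem (by norm_num) hS1

lemma ncard_image_insert (m r : ℕ) :
    (insert (r, m) '' A m).ncard = (A m).ncard := by
  apply Set.ncard_image_of_injOn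
  intro S hS S' hS' h
  have h1 : (r, m) ∉ S := notmem_self hS
  have h2 : (r, m) ∉ S' := notmem_self hS'
  calc S = (insert (r, m) S).erase (r, m) := (Finset.erase_insert h1).symm
    _ = (insert (r, m) S').erase (r, m) := by rw [h]
    _ = S' := Finset.erase_insert h2

lemma ncard_A_rec (m : ℕ) :
    (A (m + 2)).ncard = (A (m + 1)).ncard + 2 * (A m).ncard := by
  have hmem_insert : ∀ (r : ℕ) S, S ∈ insert (r, m) '' A m → (r, m) ∈ S := by
    rintro r S ⟨S0, _, rfl⟩
    exact Finset.mem_insert_self _ _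
  have hd1 : Disjoint (A (m + 1) ∪ insert (0, m) '' A m) (insert (1, m) '' A m) := by
    rw [Set.disjoint_left]
    rintro S (hS | hS) hS1
    · have h := (hS.1 _ (hmem_insert 1 S hS1)).2
      omega
    · obtain ⟨S0, hS0, rfl⟩ := hS
      have := hmem_insert 1 _ hS1
      rcases Finset.mem_insert.1 this with h | h
      · simp at h
      · exact notmem_self hS0 h
  have hd2 : Disjoint (A (m + 1)) (insert (0, m) '' A m) := by
    rw [Set.disjoint_left]
    intro S hS hS0
    have h := (hS.1 _ (hmem_insert 0 S hS0)).2
    omega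
  rw [A_decomp, Set.ncard_union_eq hd1 (((finite_A (m+1)).union ((finite_A m).image _)))
      ((finite_A m).image _),
    Set.ncard_union_eq hd2 (finite_A (m+1)) ((finite_A m).image _),
    ncard_image_insert, ncard_image_insert]
  ring

theorem stmt_9 (m : ℕ) :
    (Ttot 3 m 2 : ℤ) * 3 = 2 ^ (m + 1) + (-1) ^ m := by
  induction m using Nat.twoStepInduction with
  | zero => rw [Ttot_eq, A_small (by norm_num)]; norm_num
  | one => rw [Ttot_eq, A_small (by norm_num)]; norm_num
  | more n ih1 ih2 =>
    rw [Ttot_eq] at ih1 ih2 ⊢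
    rw [ncard_A_rec]
    push_cast
    linear_combination ih2 + 2 * ih1
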